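/- Let 1 < p < ∞ with conjugate exponent p′ (1/p + 1/p′ = 1), and let σ > 1/p. Then there exists a constant c > 0, depending only on p and σ, such that for all measurable functions F, G : ℝ² → [0, ∞], the convolution (F ∗ G)(ξ, τ) := ∫∫ F(ξ₁, τ₁) G(ξ − ξ₁, τ − τ₁) dξ₁ dτ₁ satisfies (∫∫ ((F ∗ G)(ξ, τ))^{p′} dξ dτ)^{1/p′} ≤ c · (∫∫ ⟨τ + ξ⟩^{σ p′} F(ξ, τ)^{p′} dξ dτ)^{1/p′} · (∫∫ ⟨τ − ξ⟩^{σ p′} G(ξ, τ)^{p′} dξ dτ)^{1/p′}, all quantities understood in [0, ∞]. -/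

import Mathlib

open MeasureTheory
open scoped ENNReal

/-- Japanese bracket ⟨x⟩ = (1 + x²)^{1/2}. -/
noncomputable def jap (x : ℝ) : ℝ := Real.sqrt (1 + x ^ 2)

lemma one_le_jap (x : ℝ) : 1 ≤ jap x := by
  have h : (1:ℝ) ≤ 1 + x ^ 2 := le_add_of_nonneg_right (sq_nonneg x)
  have := Real.sqrt_le_sqrt h
  simpa [jap, Real.sqrt_one] using this

lemma jap_pos (x : ℝ) : 0 < jap x := lt_of_lt_of_le one_pos (one_le_jap x)

lemma jap_rpow_pos (x e : ℝ) : 0 < jap x ^ e := Real.rpow_pos_of_pos (jap_pos x) e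

@[fun_prop, measurability]
lemma measurable_jap : Measurable jap :=
  (Real.continuous_sqrt.comp (by continuity)).measurable

@[fun_prop, measurability]
lemma measurable_ofReal_jap_rpow (e : ℝ) :
    Measurable fun t : ℝ => ENNReal.ofReal (jap t ^ e) := by
  fun_prop

lemma W_pow (e pp : ℝ) (t : ℝ) :
    ENNReal.ofReal (jap t ^ e) ^ pp = ENNReal.ofReal (jap t ^ (e * pp)) := by
  rw [ENNReal.ofReal_rpow_of_pos (jap_rpow_pos t e), ← Real.rpow_mul (jap_pos t).le]

lemma W_inv_pow (e pp : ℝ) (t : ℝ) :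
    (ENNReal.ofReal (jap t ^ e))⁻¹ ^ pp = ENNReal.ofReal (jap t ^ (-(e * pp))) := by
  rw [← ENNReal.ofReal_inv_of_pos (jap_rpow_pos t e), ← Real.rpow_neg (jap_pos t).le,
    ENNReal.ofReal_rpow_of_pos (jap_rpow_pos t _), ← Real.rpow_mul (jap_pos t).le, neg_mul]

lemma jap_lintegral_lt_top {s : ℝ} (hs : 1 < s) :
    (∫⁻ t : ℝ, ENNReal.ofReal (jap t ^ (-s))) < ⊤ := by
  have hint : Integrable (fun x : ℝ => ((1:ℝ) + ‖x‖ ^ 2) ^ (-s / 2)) :=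
    integrable_rpow_neg_one_add_norm_sq (by simpa using hs)
  have heq : ∀ t : ℝ, jap t ^ (-s) = ((1:ℝ) + ‖t‖ ^ 2) ^ (-s / 2) := by
    intro t
    rw [jap, Real.sqrt_eq_rpow, ← Real.rpow_mul (by positivity : (0:ℝ) ≤ 1 + t ^ 2),
      Real.norm_eq_abs, sq_abs]
    congr 1
    ring
  simp_rw [heq]
  exact hint.lintegral_lt_top

lemma mul_mul_inv_helper (a b x y : ℝ≥0∞) (ha0 : a ≠ 0) (ha : a ≠ ⊤) (hb0 : b ≠ 0) (hb : b ≠ ⊤) :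
    (a * x) * (b * y) * (a * b)⁻¹ = x * y := by
  rw [ENNReal.mul_inv (Or.inl ha0) (Or.inl ha)]
  calc (a * x) * (b * y) * (a⁻¹ * b⁻¹) = (a * a⁻¹) * ((b * b⁻¹) * (x * y)) := by ring
    _ = x * y := by
      rw [ENNReal.mul_inv_cancel ha0 ha, ENNReal.mul_inv_cancel hb0 hb, one_mul, one_mul]

lemma conv_weight (f : ℝ → ENNReal) (hf : Measurable f) (c : ℝ) :
    (∫⁻ z : ℝ × ℝ, f (z.2 + z.1) * f (c - (z.2 - z.1))) =
      ENNReal.ofReal 2⁻¹ * (∫⁻ t : ℝ, f t) * (∫⁻ t : ℝ, f t) := by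
  have hm : Measurable fun z : ℝ × ℝ => f (z.2 + z.1) * f (c - (z.2 - z.1)) := by fun_prop
  rw [Measure.volume_eq_prod, lintegral_prod _ hm.aemeasurable]
  have step1 : ∀ x : ℝ, (∫⁻ y : ℝ, f (y + x) * f (c - (y - x))) =
      ∫⁻ y : ℝ, f y * f (c + 2 * x - y) := by
    intro x
    have h := lintegral_add_right_eq_self (μ := volume) (fun y => f y * f (c + 2 * x - y)) x
    rw [← h]
    congr 1; funext y
    congr 2
    ring
  simp_rw [step1]
  have hswap : Measurable (Function.uncurry fun x y : ℝ => f y * f (c + 2 * x - y)) := by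
    fun_prop
  rw [lintegral_lintegral_swap hswap.aemeasurable]
  have step2 : ∀ y : ℝ, (∫⁻ x : ℝ, f y * f (c + 2 * x - y)) =
      f y * (ENNReal.ofReal 2⁻¹ * ∫⁻ t : ℝ, f t) := by
    intro y
    rw [lintegral_const_mul _ (by fun_prop)]
    congr 1
    have hmap := lintegral_map (μ := (volume : Measure ℝ))
      (f := fun t : ℝ => f (c + t - y)) (g := fun x : ℝ => (2:ℝ) * x) (by fun_prop) (by fun_prop)
    rw [Real.map_volume_mul_left two_ne_zero, lintegral_smul_measure] at hmap
    have htrans : (∫⁻ t : ℝ, f (c + t - y)) = ∫⁻ t : ℝ, f t := by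
      calc (∫⁻ t : ℝ, f (c + t - y)) = ∫⁻ t : ℝ, f (t + (c - y)) := by
            congr 1; funext t; congr 1; ring
        _ = ∫⁻ t : ℝ, f t := lintegral_add_right_eq_self (μ := volume) _ _
    rw [htrans] at hmap
    rw [← hmap]
    norm_num [abs_of_nonneg]
  simp_rw [step2]
  rw [lintegral_mul_const _ hf]
  ring

/-- Corollary 2.1, Fourier-side: for 1 < p < ∞, σ > 1/p, the convolution of two
nonnegative functions satisfies
‖F ∗ G‖_{p′} ≤ c ‖⟨τ+ξ⟩^σ F‖_{p′} ‖⟨τ−ξ⟩^σ G‖_{p′}. -/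
theorem stmt_4 (p p' σ : ℝ) (hp : 1 < p) (hpp' : 1 / p + 1 / p' = 1) (hσ : 1 / p < σ) :
    ∃ c : ℝ, 0 < c ∧ ∀ F G : ℝ × ℝ → ENNReal, Measurable F → Measurable G →
      (∫⁻ q : ℝ × ℝ, (∫⁻ z : ℝ × ℝ, F z * G (q.1 - z.1, q.2 - z.2)) ^ p') ^ (1 / p') ≤
        ENNReal.ofReal c *
          (∫⁻ q : ℝ × ℝ, ENNReal.ofReal (jap (q.2 + q.1) ^ (σ * p')) * F q ^ p') ^ (1 / p') *
          (∫⁻ q : ℝ × ℝ, ENNReal.ofReal (jap (q.2 - q.1) ^ (σ * p')) * G q ^ p') ^ (1 / p') := by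
  have hp0 : (0:ℝ) < p := lt_trans one_pos hp
  have hcon : p.HolderConjugate p' := by rw [Real.holderConjugate_iff]; constructor <;> simp [hp, ← one_div, hpp']
  have hc' : p'.HolderConjugate p := hcon.symm
  have hp'1 : 1 < p' := hc'.lt
  have hp'pos : (0:ℝ) < p' := lt_trans one_pos hp'1
  have hp'ne : p' ≠ 0 := ne_of_gt hp'pos
  have hp'nonneg : (0:ℝ) ≤ p' := le_of_lt hp'pos
  have hsp : 1 < σ * p := by
    rw [div_lt_iff₀ hp0] at hσ
    linarith
  set I : ℝ≥0∞ := ∫⁻ t : ℝ, ENNReal.ofReal (jap t ^ (-(σ * p))) with hIdef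
  have hI : I < ⊤ := jap_lintegral_lt_top hsp
  set K : ℝ≥0∞ := I * I with hKdef
  have hK : K ≠ ⊤ := ENNReal.mul_ne_top hI.ne hI.ne
  refine ⟨(K ^ (1/p)).toReal + 1, by positivity, ?_⟩
  have hKc : K ^ (1/p) ≤ ENNReal.ofReal ((K ^ (1/p)).toReal + 1) := by
    have hfin : K ^ (1/p) ≠ ⊤ := ENNReal.rpow_ne_top_of_nonneg (by positivity) hK
    calc K ^ (1/p) = ENNReal.ofReal ((K ^ (1/p)).toReal) := (ENNReal.ofReal_toReal hfin).symm
      _ ≤ ENNReal.ofReal ((K ^ (1/p)).toReal + 1) := ENNReal.ofReal_le_ofReal (by linarith)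
  intro F G hF hG
  -- measurability facts
  have hΦm : Measurable fun z : ℝ × ℝ => ENNReal.ofReal (jap (z.2 + z.1) ^ (σ * p')) * F z ^ p' := by
    fun_prop
  have hΨm : Measurable fun z : ℝ × ℝ => ENNReal.ofReal (jap (z.2 - z.1) ^ (σ * p')) * G z ^ p' := by
    fun_prop
  -- pointwise Hölder estimate
  have hHolder : ∀ q : ℝ × ℝ, (∫⁻ z : ℝ × ℝ, F z * G (q.1 - z.1, q.2 - z.2)) ≤
      (∫⁻ z : ℝ × ℝ, (ENNReal.ofReal (jap (z.2 + z.1) ^ (σ * p')) * F z ^ p') *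
        (ENNReal.ofReal (jap ((q.2 - z.2) - (q.1 - z.1)) ^ (σ * p')) *
          G (q.1 - z.1, q.2 - z.2) ^ p')) ^ (1/p') * K ^ (1/p) := by
    intro q
    set A : ℝ × ℝ → ℝ≥0∞ := fun z =>
      (ENNReal.ofReal (jap (z.2 + z.1) ^ σ) * F z) *
        (ENNReal.ofReal (jap ((q.2 - z.2) - (q.1 - z.1)) ^ σ) * G (q.1 - z.1, q.2 - z.2))
      with hAdef
    set B : ℝ × ℝ → ℝ≥0∞ := fun z =>
      (ENNReal.ofReal (jap (z.2 + z.1) ^ σ) *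
        ENNReal.ofReal (jap ((q.2 - z.2) - (q.1 - z.1)) ^ σ))⁻¹ with hBdef
    have hmA : Measurable A := by fun_prop
    have hmB : Measurable B := by fun_prop
    have hAB : ∀ z : ℝ × ℝ, F z * G (q.1 - z.1, q.2 - z.2) = A z * B z := by
      intro z
      rw [hAdef, hBdef]
      exact (mul_mul_inv_helper _ _ _ _
        (ENNReal.ofReal_pos.mpr (jap_rpow_pos _ _)).ne' ENNReal.ofReal_ne_top
        (ENNReal.ofReal_pos.mpr (jap_rpow_pos _ _)).ne' ENNReal.ofReal_ne_top).symm
    have hAp : ∀ z : ℝ × ℝ, A z ^ p' =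
        (ENNReal.ofReal (jap (z.2 + z.1) ^ (σ * p')) * F z ^ p') *
          (ENNReal.ofReal (jap ((q.2 - z.2) - (q.1 - z.1)) ^ (σ * p')) *
            G (q.1 - z.1, q.2 - z.2) ^ p') := by
      intro z
      rw [hAdef]
      simp only []
      rw [ENNReal.mul_rpow_of_nonneg _ _ hp'nonneg, ENNReal.mul_rpow_of_nonneg _ _ hp'nonneg,
        ENNReal.mul_rpow_of_nonneg _ _ hp'nonneg, W_pow, W_pow]
    have hBp : ∀ z : ℝ × ℝ, B z ^ p =
        ENNReal.ofReal (jap (z.2 + z.1) ^ (-(σ * p))) *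
          ENNReal.ofReal (jap ((q.2 - q.1) - (z.2 - z.1)) ^ (-(σ * p))) := by
      intro z
      rw [hBdef]
      simp only []
      rw [ENNReal.mul_inv (Or.inl (ENNReal.ofReal_pos.mpr (jap_rpow_pos _ _)).ne')
          (Or.inl ENNReal.ofReal_ne_top),
        ENNReal.mul_rpow_of_nonneg _ _ hp0.le, W_inv_pow, W_inv_pow]
      congr 3
      ring
    have hIB : (∫⁻ z : ℝ × ℝ, B z ^ p) ≤ K := by
      have heq : (∫⁻ z : ℝ × ℝ, B z ^ p) = ENNReal.ofReal 2⁻¹ * I * I := by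
        simp_rw [hBp]
        exact conv_weight _ (measurable_ofReal_jap_rpow _) (q.2 - q.1)
      rw [heq, hKdef]
      have h1 : ENNReal.ofReal 2⁻¹ ≤ 1 := ENNReal.ofReal_le_one.mpr (by norm_num)
      calc ENNReal.ofReal 2⁻¹ * I * I ≤ 1 * I * I := by gcongr
        _ = I * I := by rw [one_mul]
    calc (∫⁻ z : ℝ × ℝ, F z * G (q.1 - z.1, q.2 - z.2)) = ∫⁻ z : ℝ × ℝ, A z * B z :=
          lintegral_congr hAB
      _ ≤ (∫⁻ z : ℝ × ℝ, A z ^ p') ^ (1/p') * (∫⁻ z : ℝ × ℝ, B z ^ p) ^ (1/p) := by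
          simpa using
            ENNReal.lintegral_mul_le_Lp_mul_Lq volume hc' hmA.aemeasurable hmB.aemeasurable
      _ ≤ (∫⁻ z : ℝ × ℝ, (ENNReal.ofReal (jap (z.2 + z.1) ^ (σ * p')) * F z ^ p') *
            (ENNReal.ofReal (jap ((q.2 - z.2) - (q.1 - z.1)) ^ (σ * p')) *
              G (q.1 - z.1, q.2 - z.2) ^ p')) ^ (1/p') * K ^ (1/p) := by
          apply mul_le_mul'
          · apply le_of_eq
            congr 1
            exact lintegral_congr hAp
          · exact ENNReal.rpow_le_rpow hIB (by positivity)
  -- integrate the p'-th power over q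
  have hKp'ne : K ^ ((1/p) * p') ≠ ⊤ := ENNReal.rpow_ne_top_of_nonneg (by positivity) hK
  have key : (∫⁻ q : ℝ × ℝ, (∫⁻ z : ℝ × ℝ, F z * G (q.1 - z.1, q.2 - z.2)) ^ p')
      ≤ K ^ ((1/p) * p') *
        ((∫⁻ q : ℝ × ℝ, ENNReal.ofReal (jap (q.2 + q.1) ^ (σ * p')) * F q ^ p') *
          (∫⁻ q : ℝ × ℝ, ENNReal.ofReal (jap (q.2 - q.1) ^ (σ * p')) * G q ^ p')) := by
    have hmono : ∀ q : ℝ × ℝ, (∫⁻ z : ℝ × ℝ, F z * G (q.1 - z.1, q.2 - z.2)) ^ p' ≤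
        (∫⁻ z : ℝ × ℝ, (ENNReal.ofReal (jap (z.2 + z.1) ^ (σ * p')) * F z ^ p') *
          (ENNReal.ofReal (jap ((q.2 - z.2) - (q.1 - z.1)) ^ (σ * p')) *
            G (q.1 - z.1, q.2 - z.2) ^ p')) * K ^ ((1/p) * p') := by
      intro q
      have h := ENNReal.rpow_le_rpow (hHolder q) hp'nonneg
      rw [ENNReal.mul_rpow_of_nonneg _ _ hp'nonneg, ← ENNReal.rpow_mul, ← ENNReal.rpow_mul,
        one_div, inv_mul_cancel₀ hp'ne, ENNReal.rpow_one] at h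
      simpa [one_div] using h
    calc (∫⁻ q : ℝ × ℝ, (∫⁻ z : ℝ × ℝ, F z * G (q.1 - z.1, q.2 - z.2)) ^ p')
        ≤ ∫⁻ q : ℝ × ℝ, (∫⁻ z : ℝ × ℝ, (ENNReal.ofReal (jap (z.2 + z.1) ^ (σ * p')) * F z ^ p') *
            (ENNReal.ofReal (jap ((q.2 - z.2) - (q.1 - z.1)) ^ (σ * p')) *
              G (q.1 - z.1, q.2 - z.2) ^ p')) * K ^ ((1/p) * p') := lintegral_mono hmono
      _ = (∫⁻ q : ℝ × ℝ, ∫⁻ z : ℝ × ℝ, (ENNReal.ofReal (jap (z.2 + z.1) ^ (σ * p')) * F z ^ p') *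
            (ENNReal.ofReal (jap ((q.2 - z.2) - (q.1 - z.1)) ^ (σ * p')) *
              G (q.1 - z.1, q.2 - z.2) ^ p')) * K ^ ((1/p) * p') :=
          lintegral_mul_const' _ _ hKp'ne
      _ = (∫⁻ z : ℝ × ℝ, ∫⁻ q : ℝ × ℝ, (ENNReal.ofReal (jap (z.2 + z.1) ^ (σ * p')) * F z ^ p') *
            (ENNReal.ofReal (jap ((q.2 - z.2) - (q.1 - z.1)) ^ (σ * p')) *
              G (q.1 - z.1, q.2 - z.2) ^ p')) * K ^ ((1/p) * p') := by
          congr 1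
          exact lintegral_lintegral_swap (by fun_prop)
      _ = K ^ ((1/p) * p') *
          ((∫⁻ q : ℝ × ℝ, ENNReal.ofReal (jap (q.2 + q.1) ^ (σ * p')) * F q ^ p') *
            (∫⁻ q : ℝ × ℝ, ENNReal.ofReal (jap (q.2 - q.1) ^ (σ * p')) * G q ^ p')) := by
          rw [mul_comm]
          congr 1
          have hinner : ∀ z : ℝ × ℝ,
              (∫⁻ q : ℝ × ℝ, (ENNReal.ofReal (jap (z.2 + z.1) ^ (σ * p')) * F z ^ p') *
                (ENNReal.ofReal (jap ((q.2 - z.2) - (q.1 - z.1)) ^ (σ * p')) *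
                  G (q.1 - z.1, q.2 - z.2) ^ p')) =
              (ENNReal.ofReal (jap (z.2 + z.1) ^ (σ * p')) * F z ^ p') *
                ∫⁻ q : ℝ × ℝ, ENNReal.ofReal (jap (q.2 - q.1) ^ (σ * p')) * G q ^ p' := by
            intro z
            rw [lintegral_const_mul _ (by fun_prop)]
            congr 1
            have : (fun q : ℝ × ℝ => ENNReal.ofReal (jap ((q.2 - z.2) - (q.1 - z.1)) ^ (σ * p')) *
                G (q.1 - z.1, q.2 - z.2) ^ p') =
                fun q : ℝ × ℝ => (fun w : ℝ × ℝ =>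
                  ENNReal.ofReal (jap (w.2 - w.1) ^ (σ * p')) * G w ^ p') (q - z) := rfl
            rw [this]
            exact lintegral_sub_right_eq_self (μ := volume)
              (fun w : ℝ × ℝ => ENNReal.ofReal (jap (w.2 - w.1) ^ (σ * p')) * G w ^ p') z
          simp_rw [hinner]
          rw [lintegral_mul_const _ hΦm]
  -- conclude
  have final := ENNReal.rpow_le_rpow key (by positivity : (0:ℝ) ≤ 1/p')
  rw [ENNReal.mul_rpow_of_nonneg _ _ (by positivity : (0:ℝ) ≤ 1/p'),
    ENNReal.mul_rpow_of_nonneg _ _ (by positivity : (0:ℝ) ≤ 1/p'),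
    ← ENNReal.rpow_mul] at final
  have hexp : (1/p) * p' * (1/p') = 1/p := by
    field_simp
  rw [hexp] at final
  refine le_trans final ?_
  rw [← mul_assoc]
  exact mul_le_mul_left (mul_le_mul_left hKc _) _
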